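/- Let (B_w, ‖·‖_w) and (B_s, ‖·‖_s) be Banach spaces with a bounded inclusion ι : B_s → B_w, and let L : B_w → B_w be a bounded linear operator with L(B_s) ⊆ B_s and sup_{n∈ℕ} ‖Lⁿ‖_w < ∞. Assume there is a decomposition B_w = B_w⁰ ⊕ B_w¹ into L-invariant subspaces such that ‖Lⁿ restricted to B_s ∩ B_w⁰‖_s ≤ Q qⁿ for some Q ≥ 0 and 0 ≤ q < 1, L restricted to B_w¹ is diagonalizable with all eigenvalues of modulus 1, B_w¹ ⊆ B_s, and dim B_w¹ < ∞. Then there exist N ∈ ℕ, r < 1 and R ∈ ℝ such that ‖L^N g‖_s ≤ r ‖g‖_s + R ‖g‖_w for all g ∈ B_s. -/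

import Mathlib

set_option maxHeartbeats 1000000
set_option synthInstance.maxHeartbeats 400000


/-- Lemma 2.5: if `Bw = Bw⁰ ⊕ Bw¹` with `L`-invariant subspaces, `L` contracts
exponentially on `Bs ∩ Bw⁰`, the iterates of `L` are uniformly bounded on `Bw`, and `L`
restricted to the finite-dimensional subspace `Bw¹ ⊆ Bs` is diagonalizable with unit spectrum
(a basis `v` of eigenvectors whose eigenvalues have modulus 1), then some iterate of `L`
satisfies a Lasota–Yorke inequality on `Bs`. -/
theorem stmt1 {Bw Bs : Type*}
    [NormedAddCommGroup Bw] [NormedSpace ℝ Bw] [CompleteSpace Bw]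
    [NormedAddCommGroup Bs] [NormedSpace ℝ Bs] [CompleteSpace Bs]
    (ι : Bs →L[ℝ] Bw) (hι : Function.Injective ι)
    (L : Bw →L[ℝ] Bw)
    (Ls : Bs →ₗ[ℝ] Bs) (hLs : ∀ g, ι (Ls g) = L (ι g))
    (C : ℝ) (hC : ∀ n : ℕ, ‖(L ^ n : Bw →L[ℝ] Bw)‖ ≤ C)
    (W0 W1 : Submodule ℝ Bw) (hcompl : IsCompl W0 W1)
    (hW0inv : ∀ x ∈ W0, L x ∈ W0) (hW1inv : ∀ x ∈ W1, L x ∈ W1)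
    (Q q : ℝ) (hQ : 0 ≤ Q) (hq0 : 0 ≤ q) (hq1 : q < 1)
    (hcontr : ∀ (n : ℕ) (g : Bs), ι g ∈ W0 → ‖(Ls ^ n) g‖ ≤ Q * q ^ n * ‖g‖)
    (d : ℕ) (v : Fin d → Bw)
    (hspan : W1 = Submodule.span ℝ (Set.range v))
    (hindep : LinearIndependent ℝ v)
    (heig : ∀ i, ∃ c : ℝ, |c| = 1 ∧ L (v i) = c • v i)
    (hW1s : ∀ x ∈ W1, ∃ g : Bs, ι g = x) :
    ∃ (N : ℕ) (r R : ℝ), r < 1 ∧ ∀ g : Bs, ‖(Ls ^ N) g‖ ≤ r * ‖g‖ + R * ‖ι g‖ := by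
  classical
  subst hspan
  set W1 : Submodule ℝ Bw := Submodule.span ℝ (Set.range v) with hW1def
  have hC0 : 0 ≤ C := le_trans (norm_nonneg _) (hC 0)
  -- choose preimages of the basis vectors in Bs
  have hvmem : ∀ i, v i ∈ W1 := fun i => Submodule.subset_span ⟨i, rfl⟩
  choose u hu using fun i => hW1s (v i) (hvmem i)
  haveI : FiniteDimensional ℝ W1 := FiniteDimensional.span_of_finite ℝ (Set.finite_range v)
  let b : Module.Basis (Fin d) ℝ W1 := Module.Basis.span hindep
  let T : W1 →ₗ[ℝ] Bs := b.constr ℝ u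
  have hT : ∀ x : W1, ι (T x) = (x : Bw) := by
    have h : (ι : Bs →ₗ[ℝ] Bw).comp T = W1.subtype := by
      apply b.ext
      intro i
      have h1 : T (b i) = u i := b.constr_basis ℝ u i
      have h2 : ((b i : ↥W1) : Bw) = v i := congrArg Subtype.val (Module.Basis.span_apply hindep i)
      simp [h1, h2, hu]
    intro x
    simpa using LinearMap.congr_fun h x
  have hTcont : Continuous T := T.continuous_of_finiteDimensional
  let Tc : W1 →L[ℝ] Bs := ⟨T, hTcont⟩
  set K := ‖Tc‖ with hKdef
  have hK0 : 0 ≤ K := by rw [hKdef]; exact norm_nonneg Tc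
  -- L ∘ L is the identity on W1
  have hc2 : ∀ i, L (L (v i)) = v i := by
    intro i
    obtain ⟨c, hc, hv⟩ := heig i
    have hcc : c * c = 1 := by nlinarith [sq_abs c, hc]
    rw [hv, map_smul, hv, smul_smul, hcc, one_smul]
  have hL2W1 : ∀ x ∈ W1, L (L x) = x := by
    intro x hx
    induction hx using Submodule.span_induction with
    | mem x hx => obtain ⟨i, rfl⟩ := hx; exact hc2 i
    | zero => simp
    | add x y _ _ hx hy => simp [map_add, hx, hy]
    | smul c x _ hx => simp [map_smul, hx]
  have hLs2 : ∀ g : Bs, ι g ∈ W1 → Ls (Ls g) = g := by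
    intro g hg
    apply hι
    rw [hLs, hLs, hL2W1 _ hg]
  have hLsN : ∀ (m : ℕ) (g : Bs), ι g ∈ W1 → (Ls ^ (2 * m)) g = g := by
    intro m
    induction m with
    | zero => intro g _; simp
    | succ k ih =>
      intro g hg
      have h2 : (Ls ^ 2) g = g := by
        rw [pow_two, Module.End.mul_apply, hLs2 g hg]
      have : 2 * (k + 1) = 2 * k + 2 := by ring
      rw [this, pow_add, Module.End.mul_apply, h2, ih g hg]
  -- intertwining for powers
  have hint : ∀ (n : ℕ) (g : Bs), ι ((Ls ^ n) g) = (L ^ n) (ι g) := by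
    intro n
    induction n with
    | zero => intro g; simp
    | succ k ih =>
      intro g
      rw [pow_succ, pow_succ, Module.End.mul_apply, ContinuousLinearMap.mul_apply, ih (Ls g), hLs]
  -- choose N
  have hqn : Filter.Tendsto (fun n : ℕ => Q * q ^ n) Filter.atTop (nhds 0) := by
    simpa using (tendsto_pow_atTop_nhds_zero_of_lt_one hq0 hq1).const_mul Q
  obtain ⟨n₀, hn₀⟩ := (hqn.eventually (gt_mem_nhds one_pos)).exists
  refine ⟨2 * n₀, Q * q ^ (2 * n₀), (Q * q ^ (2 * n₀) + 1) * (K * C), ?_, ?_⟩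
  · have h1 : q ^ n₀ ≤ 1 := pow_le_one₀ hq0 hq1.le
    have h2 : q ^ (2 * n₀) = q ^ n₀ * q ^ n₀ := by rw [two_mul, pow_add]
    have h3 : 0 ≤ q ^ n₀ := pow_nonneg hq0 _
    have h4 : 0 ≤ Q * q ^ n₀ := mul_nonneg hQ h3
    rw [h2, ← mul_assoc]
    calc Q * q ^ n₀ * q ^ n₀ ≤ Q * q ^ n₀ * 1 := mul_le_mul_of_nonneg_left h1 h4
      _ < 1 := by rwa [mul_one]
  · intro g
    set x1 : W1 := W1.projectionOnto W0 hcompl.symm (ι g) with hx1def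
    set g1 : Bs := T x1 with hg1def
    have hιg1 : ι g1 = (x1 : Bw) := hT x1
    have hιg1mem : ι g1 ∈ W1 := by rw [hιg1]; exact x1.2
    set g0 : Bs := g - g1 with hg0def
    have hιg0 : ι g0 = ι g - (x1 : Bw) := by rw [hg0def, map_sub, hιg1]
    have hιg0mem : ι g0 ∈ W0 := by
      rw [hιg0]
      have := Submodule.projection_add_projection_eq_self hcompl (ι g)
      have heq : ι g - (x1 : Bw) = (W0.projectionOnto W1 hcompl (ι g) : Bw) := by
        rw [hx1def, sub_eq_iff_eq_add]; exact this.symm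
      rw [heq]
      exact (W0.projectionOnto W1 hcompl (ι g)).2
    -- bound on ‖x1‖
    have hx1bound : ‖(x1 : Bw)‖ ≤ C * ‖ι g‖ := by
      have hbd : ∀ m : ℕ, ‖(x1 : Bw)‖ ≤ C * ‖ι g‖ + ‖ι‖ * (Q * q ^ (2 * m) * ‖g0‖) := by
        intro m
        have hdecomp : (L ^ (2 * m)) (ι g) = ι ((Ls ^ (2 * m)) g0) + (x1 : Bw) := by
          have : ι g = ι g0 + ι g1 := by rw [hg0def, map_sub]; abel
          rw [this, map_add, ← hint, ← hint, hLsN m g1 hιg1mem, hιg1]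
        have h1 : ‖(x1 : Bw)‖ ≤ ‖(L ^ (2 * m)) (ι g)‖ + ‖ι ((Ls ^ (2 * m)) g0)‖ := by
          have : (x1 : Bw) = (L ^ (2 * m)) (ι g) - ι ((Ls ^ (2 * m)) g0) := by
            rw [hdecomp]; abel
          rw [this]
          exact norm_sub_le _ _
        have h2 : ‖(L ^ (2 * m)) (ι g)‖ ≤ C * ‖ι g‖ := by
          calc ‖(L ^ (2 * m)) (ι g)‖ ≤ ‖(L ^ (2 * m) : Bw →L[ℝ] Bw)‖ * ‖ι g‖ :=
                (L ^ (2 * m)).le_opNorm _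
            _ ≤ C * ‖ι g‖ := by
                apply mul_le_mul_of_nonneg_right (hC _) (norm_nonneg _)
        have h3 : ‖ι ((Ls ^ (2 * m)) g0)‖ ≤ ‖ι‖ * (Q * q ^ (2 * m) * ‖g0‖) := by
          calc ‖ι ((Ls ^ (2 * m)) g0)‖ ≤ ‖ι‖ * ‖(Ls ^ (2 * m)) g0‖ := ι.le_opNorm _
            _ ≤ ‖ι‖ * (Q * q ^ (2 * m) * ‖g0‖) := by
                apply mul_le_mul_of_nonneg_left (hcontr _ g0 hιg0mem) (norm_nonneg _)
        linarith
      have htend : Filter.Tendsto (fun m : ℕ => C * ‖ι g‖ + ‖ι‖ * (Q * q ^ (2 * m) * ‖g0‖))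
          Filter.atTop (nhds (C * ‖ι g‖)) := by
        have hq2 : Filter.Tendsto (fun m : ℕ => q ^ (2 * m)) Filter.atTop (nhds 0) := by
          have h : ∀ m : ℕ, q ^ (2 * m) = (q ^ 2) ^ m := fun m => by rw [← pow_mul]
          simp only [h]
          exact tendsto_pow_atTop_nhds_zero_of_lt_one (by positivity)
            (by nlinarith)
        have := ((hq2.const_mul Q).mul_const ‖g0‖).const_mul ‖ι‖
        simpa using (tendsto_const_nhds.add this)
      exact ge_of_tendsto' htend hbd
    -- bound on ‖g1‖
    have hg1bound : ‖g1‖ ≤ K * (C * ‖ι g‖) := by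
      calc ‖g1‖ = ‖Tc x1‖ := rfl
        _ ≤ K * ‖x1‖ := Tc.le_opNorm _
        _ ≤ K * (C * ‖ι g‖) := by
            apply mul_le_mul_of_nonneg_left _ hK0
            simpa using hx1bound
    have hg0bound : ‖g0‖ ≤ ‖g‖ + K * (C * ‖ι g‖) := by
      calc ‖g0‖ ≤ ‖g‖ + ‖g1‖ := by rw [hg0def]; exact norm_sub_le _ _
        _ ≤ ‖g‖ + K * (C * ‖ι g‖) := by linarith
    have hmain : (Ls ^ (2 * n₀)) g = (Ls ^ (2 * n₀)) g0 + g1 := by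
      have : g = g0 + g1 := by rw [hg0def]; abel
      rw [this, map_add, hLsN n₀ g1 hιg1mem]
    have hr0 : 0 ≤ Q * q ^ (2 * n₀) := by positivity
    calc ‖(Ls ^ (2 * n₀)) g‖ ≤ ‖(Ls ^ (2 * n₀)) g0‖ + ‖g1‖ := by
          rw [hmain]; exact norm_add_le _ _
      _ ≤ Q * q ^ (2 * n₀) * ‖g0‖ + K * (C * ‖ι g‖) := by
          have := hcontr (2 * n₀) g0 hιg0mem
          linarith
      _ ≤ Q * q ^ (2 * n₀) * (‖g‖ + K * (C * ‖ι g‖)) + K * (C * ‖ι g‖) := by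
          have := mul_le_mul_of_nonneg_left hg0bound hr0
          linarith
      _ = Q * q ^ (2 * n₀) * ‖g‖ + (Q * q ^ (2 * n₀) + 1) * (K * C) * ‖ι g‖ := by ring
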